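/- arXiv:1104.1876 — 2 statements merged into one kernel-verified Lean document; each statement's English description precedes it below -/
import Mathlib

section
/- Let κ ∈ ℝ, n ≥ 2. Define γ_{n,n} = 1 and for 2 ≤ m ≤ n−1, γ_{n,m−1} = m(m−1)/(n(−κ−n+1) − (m−1)(−κ−m+2)) · γ_{n,m}; set ξ_n(x) = Σ_{m=2}^n γ_{n,m} x^m. Let b_{n,0} ∈ ℝ and b_{n,k} = −κ b_{n,k−1} + (n(−κ−n+1))^{k−1} · 2 γ_{n,2} for k ≥ 1. Let A_0 = −κx d/dx + x(1−x) d²/dx². Then for all k ≥ 1 and a ∈ ℝ: A_0^k [ξ_n + b_{n,0} x + a] = (n(−κ−n+1))^k ξ_n + b_{n,k} x. -/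
open Polynomial

/-- The degenerate Wright–Fisher generator A₀ = −κx d/dx + x(1−x) d²/dx². -/
noncomputable def wfGen (κ : ℝ) : Polynomial ℝ →ₗ[ℝ] Polynomial ℝ :=
  (LinearMap.mulLeft ℝ (Polynomial.C (-κ) * Polynomial.X)).comp Polynomial.derivative
    + (LinearMap.mulLeft ℝ (Polynomial.X * (1 - Polynomial.X))).comp
        (Polynomial.derivative.comp Polynomial.derivative)


lemma wf_pow (κ : ℝ) (m : ℕ) :
    wfGen κ (X ^ (m+2)) =
      C (((m:ℝ)+2) * (-κ - ((m:ℝ)+2) + 1)) * X ^ (m+2)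
        + C (((m:ℝ)+2) * (((m:ℝ)+2) - 1)) * X ^ (m+1) := by
  have h1 : derivative (X ^ (m+2) : Polynomial ℝ) = C ((m:ℝ)+2) * X ^ (m+1) := by
    simp [derivative_X_pow]
    rw [show (C (2:ℝ)) = (2 : Polynomial ℝ) from map_ofNat C 2]; ring
  have h2 : derivative (C ((m:ℝ)+2) * X ^ (m+1)) = C (((m:ℝ)+2) * ((m:ℝ)+1)) * X ^ m := by
    simp [derivative_X_pow]
    ring
  simp only [wfGen, LinearMap.add_apply, LinearMap.comp_apply, LinearMap.mulLeft_apply]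
  rw [h1, h2]
  simp only [map_mul, map_add, map_sub, map_neg, map_one, map_ofNat]
  ring

lemma wf_pow' (κ : ℝ) {m : ℕ} (hm : 2 ≤ m) :
    wfGen κ (X ^ m) =
      C ((m:ℝ) * (-κ - (m:ℝ) + 1)) * X ^ m
        + C ((m:ℝ) * ((m:ℝ) - 1)) * X ^ (m-1) := by
  obtain ⟨j, rfl⟩ : ∃ j, m = j + 2 := ⟨m - 2, by omega⟩
  rw [show j + 2 - 1 = j + 1 from rfl]
  push_cast
  exact wf_pow κ j

lemma wf_smul (κ c : ℝ) (p : Polynomial ℝ) : wfGen κ (C c * p) = C c * wfGen κ p := by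
  simpa [smul_eq_C_mul] using (wfGen κ).map_smul c p

lemma wf_X (κ : ℝ) (c : ℝ) : wfGen κ (C c * X) = C (-κ * c) * X := by
  simp [wfGen]; ring

lemma wf_C (κ : ℝ) (a : ℝ) : wfGen κ (C a) = 0 := by
  simp [wfGen]

lemma wf_xi (κ : ℝ) (n : ℕ) (hn : 2 ≤ n) (γ : ℕ → ℝ) (hγn : γ n = 1)
    (hden : ∀ m : ℕ, 2 ≤ m → m ≤ n →
      ((n : ℝ) * (-κ - n + 1) - ((m : ℝ) - 1) * (-κ - m + 2)) ≠ 0)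
    (hγ : ∀ m : ℕ, 2 ≤ m → m ≤ n →
      γ (m - 1) = ((m : ℝ) * ((m : ℝ) - 1))
          / ((n : ℝ) * (-κ - n + 1) - ((m : ℝ) - 1) * (-κ - m + 2)) * γ m) :
    wfGen κ (∑ m ∈ Finset.Icc 2 n, C (γ m) * X ^ m)
      = C ((n : ℝ) * (-κ - n + 1)) * (∑ m ∈ Finset.Icc 2 n, C (γ m) * X ^ m)
        + C (2 * γ 2) * X := by
  set lam : ℝ := (n : ℝ) * (-κ - n + 1) with hlam
  -- key coefficient identity
  have key : ∀ m : ℕ, 2 ≤ m → m ≤ n - 1 →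
      γ m * ((m:ℝ) * (-κ - m + 1)) + γ (m+1) * (((m:ℝ)+1) * (m:ℝ)) = lam * γ m := by
    intro m hm2 hm
    have h2 : 2 ≤ m + 1 := by omega
    have h3 : m + 1 ≤ n := by omega
    have hd := hden (m+1) h2 h3
    have hg := hγ (m+1) h2 h3
    rw [show m + 1 - 1 = m from rfl] at hg
    push_cast at hd hg ⊢
    have e : lam - ((m:ℝ) + 1 - 1) * (-κ - ((m:ℝ)+1) + 2) = lam - (m:ℝ) * (-κ - (m:ℝ) + 1) := by
      ring
    rw [e] at hd hg
    have hg' : γ m * (lam - (m:ℝ) * (-κ - (m:ℝ) + 1)) = ((m:ℝ)+1) * ((m:ℝ)+1-1) * γ (m+1) := by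
      rw [hg]; field_simp
    linear_combination -hg'
  -- step 1: expand wfGen over the sum
  have step1 : wfGen κ (∑ m ∈ Finset.Icc 2 n, C (γ m) * X ^ m)
      = (∑ m ∈ Finset.Icc 2 n, C (γ m * ((m:ℝ) * (-κ - m + 1))) * X ^ m)
        + ∑ m ∈ Finset.Icc 2 n, C (γ m * ((m:ℝ) * ((m:ℝ) - 1))) * X ^ (m-1) := by
    rw [map_sum, ← Finset.sum_add_distrib]
    refine Finset.sum_congr rfl ?_
    intro m hm
    rw [Finset.mem_Icc] at hm
    rw [wf_smul, wf_pow' κ hm.1]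
    simp only [map_mul]
    ring
  -- step 2: reindex the second sum
  have step2 : (∑ m ∈ Finset.Icc 2 n, C (γ m * ((m:ℝ) * ((m:ℝ) - 1))) * X ^ (m-1))
      = ∑ j ∈ Finset.Icc 1 (n-1), C (γ (j+1) * (((j:ℝ)+1) * (j:ℝ))) * X ^ j := by
    have hmap : (Finset.Icc 1 (n-1)).map (addRightEmbedding 1) = Finset.Icc 2 n := by
      rw [Finset.map_add_right_Icc]
      congr 1
      omega
    rw [← hmap, Finset.sum_map]
    refine Finset.sum_congr rfl ?_
    intro j hj
    simp only [addRightEmbedding_apply, Nat.add_sub_cancel]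
    congr 2
    push_cast
    ring
  -- step 3: rewrite the RHS as a single sum
  have step3 : C lam * (∑ m ∈ Finset.Icc 2 n, C (γ m) * X ^ m)
      = ∑ m ∈ Finset.Icc 2 n, C (lam * γ m) * X ^ m := by
    rw [Finset.mul_sum]
    refine Finset.sum_congr rfl ?_
    intro m _
    rw [← mul_assoc, ← C_mul]
  rw [step1, step2, step3]
  -- split off endpoints
  have hA : Finset.Icc 2 n = insert n (Finset.Icc 2 (n-1)) := by
    ext x; simp only [Finset.mem_Icc, Finset.mem_insert]; omega
  have hB : Finset.Icc 1 (n-1) = insert 1 (Finset.Icc 2 (n-1)) := by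
    ext x; simp only [Finset.mem_Icc, Finset.mem_insert]; omega
  have hnA : n ∉ Finset.Icc 2 (n-1) := by simp only [Finset.mem_Icc]; omega
  have h1B : (1:ℕ) ∉ Finset.Icc 2 (n-1) := by simp only [Finset.mem_Icc]; omega
  rw [hA, hB, Finset.sum_insert hnA, Finset.sum_insert h1B, Finset.sum_insert hnA]
  have emid : (∑ m ∈ Finset.Icc 2 (n-1), C (γ m * ((m:ℝ) * (-κ - m + 1))) * X ^ m)
      + ∑ m ∈ Finset.Icc 2 (n-1), C (γ (m+1) * (((m:ℝ)+1) * (m:ℝ))) * X ^ m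
      = ∑ m ∈ Finset.Icc 2 (n-1), C (lam * γ m) * X ^ m := by
    rw [← Finset.sum_add_distrib]
    refine Finset.sum_congr rfl ?_
    intro m hm
    rw [Finset.mem_Icc] at hm
    rw [← add_mul, ← C_add, key m hm.1 hm.2]
  have etop : C (γ n * ((n:ℝ) * (-κ - n + 1))) = C (lam * γ n) := by
    rw [hγn, hlam]; ring_nf
  have ebot : C (γ 2 * ((1 + 1) * 1) : ℝ) = C (2 * γ 2) := by norm_num; ring
  push_cast
  linear_combination emid + etop * X ^ n + ebot * X

/-- Theorem 3, equation (A^k_psi_n): A₀ᵏ[ξₙ + b₀x + a] = λₙᵏ ξₙ + bₖ x, where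
λₙ = n(−κ−n+1), ξₙ = Σ_{m=2}^n γₘ xᵐ with γₙ = 1 and the γ-recursion, and
bₖ = −κ b_{k−1} + λₙ^{k−1}·2γ₂. -/
theorem stmt18 (κ : ℝ) (n : ℕ) (hn : 2 ≤ n) (γ : ℕ → ℝ) (hγn : γ n = 1)
    (hden : ∀ m : ℕ, 2 ≤ m → m ≤ n →
      ((n : ℝ) * (-κ - n + 1) - ((m : ℝ) - 1) * (-κ - m + 2)) ≠ 0)
    (hγ : ∀ m : ℕ, 2 ≤ m → m ≤ n →
      γ (m - 1) = ((m : ℝ) * ((m : ℝ) - 1))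
          / ((n : ℝ) * (-κ - n + 1) - ((m : ℝ) - 1) * (-κ - m + 2)) * γ m)
    (b : ℕ → ℝ)
    (hb : ∀ k : ℕ, 1 ≤ k →
      b k = -κ * b (k - 1) + ((n : ℝ) * (-κ - n + 1)) ^ (k - 1) * (2 * γ 2))
    (a : ℝ) (k : ℕ) (hk : 1 ≤ k) :
    ((wfGen κ) ^ k)
        ((∑ m ∈ Finset.Icc 2 n, Polynomial.C (γ m) * X ^ m) + Polynomial.C (b 0) * X
          + Polynomial.C a)
      = Polynomial.C (((n : ℝ) * (-κ - n + 1)) ^ k)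
          * (∑ m ∈ Finset.Icc 2 n, Polynomial.C (γ m) * X ^ m)
        + Polynomial.C (b k) * X := by
  induction k, hk using Nat.le_induction with
  | base =>
    have hb1 := hb 1 le_rfl
    rw [show (1:ℕ) - 1 = 0 from rfl] at hb1
    rw [pow_one, map_add, map_add, wf_xi κ n hn γ hγn hden hγ, wf_X, wf_C, hb1]
    simp only [map_add, map_mul, map_neg, map_pow, map_sub, map_one, map_ofNat, pow_one, pow_zero]
    ring
  | succ k hk1 IH =>
    have hbk := hb (k+1) (by omega)
    rw [Nat.add_sub_cancel] at hbk
    rw [pow_succ', Module.End.mul_apply, IH, map_add, wf_smul,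
      wf_xi κ n hn γ hγn hden hγ, wf_X, hbk]
    simp only [map_add, map_mul, map_neg, map_pow, map_sub, map_one, map_ofNat]
    ring
end

section
/- With notation as in the previous statement (κ > 0, γ_{n,m}, ξ_n, b_{n,k} with b_{n,0} = 0), let λ_n = n(−κ−n+1) and define V_0(t)ξ_n = Σ_{k=1}^∞ (t^k/k!) A_0^{k−1} ξ_n. Then d/dx [V_0(t) ξ_n](x)|_{x=0} = Σ_{k=1}^∞ (t^k/k!) b_{n,k−1}, and this series converges absolutely for every t ≥ 0. -/
open Polynomial

lemma wfGen_apply (κ : ℝ) (p : Polynomial ℝ) :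
    wfGen κ p = (C (-κ) * X) * derivative p + (X * (1 - X)) * derivative (derivative p) := rfl

lemma wfGen_monomial (κ a : ℝ) (m : ℕ) :
    wfGen κ (C a * X ^ m)
      = C (a * ((m : ℝ) * (-κ - m + 1))) * X ^ m
        + C (a * m * ((m : ℝ) - 1)) * X ^ (m - 1) := by
  match m with
  | 0 => simp [wfGen_apply]
  | 1 => simp [wfGen_apply]; ring
  | (k+2) =>
      rw [wfGen_apply]
      simp only [derivative_C_mul, derivative_X_pow, Nat.add_sub_cancel]
      push_cast
      simp only [map_add, map_mul, map_sub, map_neg, map_one, map_ofNat]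
      ring

lemma wfGen_X (κ : ℝ) : wfGen κ X = C (-κ) * X := by
  have := wfGen_monomial κ 1 1
  simpa using this

-- key eigen computation
lemma wfGen_eigen (κ : ℝ) (n : ℕ) (hn : 2 ≤ n) (γ : ℕ → ℝ)
    (hrec : ∀ m : ℕ, 2 ≤ m → m < n →
      γ m * ((n : ℝ) * (-κ - n + 1)) =
        γ m * ((m : ℝ) * (-κ - m + 1)) + ((m : ℝ) + 1) * m * γ (m + 1)) :
    wfGen κ (∑ m ∈ Finset.Icc 2 n, C (γ m) * X ^ m)
      = C ((n : ℝ) * (-κ - n + 1)) * (∑ m ∈ Finset.Icc 2 n, C (γ m) * X ^ m)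
        + C (2 * γ 2) * X := by
  set L : ℝ := (n : ℝ) * (-κ - n + 1) with hL
  set g : ℕ → Polynomial ℝ :=
    fun m => if m ≤ n then C (γ m * m * ((m : ℝ) - 1)) * X ^ (m - 1) else 0 with hg
  rw [map_sum]
  have hterm : ∀ m ∈ Finset.Icc 2 n,
      wfGen κ (C (γ m) * X ^ m) = C L * (C (γ m) * X ^ m) + (g m - g (m + 1)) := by
    intro m hm
    obtain ⟨h2m, hmn⟩ := Finset.mem_Icc.mp hm
    rw [wfGen_monomial]
    have hgm : g m = C (γ m * m * ((m : ℝ) - 1)) * X ^ (m - 1) := if_pos hmn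
    rcases eq_or_lt_of_le hmn with rfl | hlt
    · have hgm1 : g (m + 1) = 0 := if_neg (by omega)
      rw [hgm, hgm1]
      have : γ m * ((m : ℝ) * (-κ - m + 1)) = L * γ m := by rw [hL]; ring
      rw [this]
      simp only [map_mul]
      ring
    · have hgm1 : g (m + 1) = C (γ (m + 1) * (m + 1) * (((m : ℝ) + 1) - 1)) * X ^ m := by
        rw [hg]
        simp only [if_pos (by omega : m + 1 ≤ n), Nat.add_sub_cancel]
        push_cast
        ring_nf
      rw [hgm, hgm1]
      have hc : γ m * ((m : ℝ) * (-κ - m + 1))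
          = L * γ m - γ (m + 1) * ((m : ℝ) + 1) * (((m : ℝ) + 1) - 1) := by
        have := hrec m h2m hlt
        linarith [this]
      rw [hc, map_sub]
      simp only [map_mul]
      ring
  rw [Finset.sum_congr rfl hterm, Finset.sum_add_distrib, ← Finset.mul_sum]
  congr 1
  -- telescoping
  have htel : ∑ m ∈ Finset.Icc 2 n, (g m - g (m + 1)) = g 2 - g (n + 1) := by
    have hIcc : Finset.Icc 2 n = Finset.Ico 2 (n + 1) := by
      rw [Finset.Ico_add_one_right_eq_Icc]
    rw [hIcc, Finset.sum_Ico_eq_sum_range]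
    have := Finset.sum_range_sub' (fun i => g (2 + i)) (n + 1 - 2)
    simp only [← Nat.add_assoc] at this
    rw [this]
    have h1 : 2 + (n + 1 - 2) = n + 1 := by omega
    rw [h1, Nat.add_zero]
  rw [htel]
  have h2 : g 2 = C (γ 2 * 2 * (2 - 1)) * X ^ 1 := by
    rw [hg]; simp only [if_pos hn]; norm_num
  have hn1 : g (n + 1) = 0 := if_neg (by omega)
  rw [h2, hn1]
  have : γ 2 * 2 * ((2:ℝ) - 1) = 2 * γ 2 := by ring
  rw [sub_zero, pow_one, this]

/-- Theorem 3, equation (recursion-formula-for-derivative):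
d/dx[V₀(t)ξₙ]|₀ = Σ_{k≥1} (tᵏ/k!) b_{k−1}, with absolute convergence. -/
theorem stmt19 (κ : ℝ) (hκ : 0 < κ) (n : ℕ) (hn : 2 ≤ n) (γ : ℕ → ℝ) (hγn : γ n = 1)
    (hden : ∀ m : ℕ, 2 ≤ m → m ≤ n →
      ((n : ℝ) * (-κ - n + 1) - ((m : ℝ) - 1) * (-κ - m + 2)) ≠ 0)
    (hγ : ∀ m : ℕ, 2 ≤ m → m ≤ n →
      γ (m - 1) = ((m : ℝ) * ((m : ℝ) - 1))
          / ((n : ℝ) * (-κ - n + 1) - ((m : ℝ) - 1) * (-κ - m + 2)) * γ m)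
    (b : ℕ → ℝ) (hb0 : b 0 = 0)
    (hb : ∀ k : ℕ, 1 ≤ k →
      b k = -κ * b (k - 1) + ((n : ℝ) * (-κ - n + 1)) ^ (k - 1) * (2 * γ 2))
    (t : ℝ) (ht : 0 ≤ t) :
    Summable (fun k : ℕ => |t ^ (k + 1) / (Nat.factorial (k + 1) : ℝ) * b k|)
    ∧ HasSum (fun k : ℕ => (t ^ (k + 1) / (Nat.factorial (k + 1) : ℝ))
          * ((derivative (((wfGen κ) ^ k)
              (∑ m ∈ Finset.Icc 2 n, Polynomial.C (γ m) * X ^ m))).eval 0))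
        (∑' k : ℕ, (t ^ (k + 1) / (Nat.factorial (k + 1) : ℝ)) * b k) := by
  set L : ℝ := (n : ℝ) * (-κ - n + 1) with hLdef
  set ξ : Polynomial ℝ := ∑ m ∈ Finset.Icc 2 n, C (γ m) * X ^ m with hξdef
  -- derive the clean recursion from hγ and hden
  have hrec : ∀ m : ℕ, 2 ≤ m → m < n →
      γ m * L = γ m * ((m : ℝ) * (-κ - m + 1)) + ((m : ℝ) + 1) * m * γ (m + 1) := by
    intro m h2 hlt
    have h1 := hγ (m + 1) (by omega) (by omega)
    have h2' := hden (m + 1) (by omega) (by omega)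
    have hcast : ((m + 1 : ℕ) : ℝ) = (m : ℝ) + 1 := by push_cast; ring
    rw [hcast] at h1 h2'
    have hd : ((m : ℝ) + 1 - 1) * (-κ - ((m : ℝ) + 1) + 2) = (m : ℝ) * (-κ - m + 1) := by ring
    rw [hd] at h1 h2'
    field_simp at h1
    rw [Nat.add_sub_cancel] at h1
    linarith [h1]
  have hkey := wfGen_eigen κ n hn γ hrec
  rw [← hLdef, ← hξdef] at hkey
  -- powers
  have hpow : ∀ k : ℕ, ((wfGen κ) ^ k) ξ = C (L ^ k) * ξ + C (b k) * X := by
    intro k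
    induction k with
    | zero => simp [hb0]
    | succ k ih =>
      have hstep : ((wfGen κ) ^ (k + 1)) ξ = wfGen κ (((wfGen κ) ^ k) ξ) := by
        rw [pow_succ']
        rfl
      rw [hstep, ih, map_add]
      have hsm : ∀ (c : ℝ) (p : Polynomial ℝ), wfGen κ (C c * p) = C c * wfGen κ p := by
        intro c p
        rw [← smul_eq_C_mul, map_smul, smul_eq_C_mul]
      rw [hsm, hsm, hkey, wfGen_X]
      have hbk := hb (k + 1) (by omega)
      rw [Nat.add_sub_cancel] at hbk
      rw [hbk]
      simp only [map_add, map_mul, map_neg, map_pow]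
      ring
  -- derivative at 0
  have hξ1 : ξ.coeff 1 = 0 := by
    rw [hξdef, Polynomial.finset_sum_coeff]
    apply Finset.sum_eq_zero
    intro m hm
    obtain ⟨h2m, _⟩ := Finset.mem_Icc.mp hm
    rw [coeff_C_mul, coeff_X_pow, if_neg (by omega)]
    ring
  have hderiv : ∀ k : ℕ, (derivative (((wfGen κ) ^ k) ξ)).eval 0 = b k := by
    intro k
    rw [hpow k]
    simp only [derivative_add, derivative_C_mul, derivative_X, mul_one, eval_add,
      eval_mul, eval_C]
    have : (derivative ξ).eval 0 = ξ.coeff 1 := by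
      rw [← Polynomial.coeff_zero_eq_eval_zero, Polynomial.coeff_derivative]
      push_cast; ring
    rw [this, hξ1]
    ring
  -- summability
  set M : ℝ := κ + |L| + |2 * γ 2| with hM
  have hM0 : 0 ≤ M := by positivity
  have hbbd : ∀ k : ℕ, |b k| ≤ k * M ^ k := by
    intro k
    induction k with
    | zero => simp [hb0]
    | succ k ih =>
      have hbk := hb (k + 1) (by omega)
      rw [Nat.add_sub_cancel] at hbk
      rw [hbk]
      have h1 : |(-κ) * b k + L ^ k * (2 * γ 2)| ≤ κ * |b k| + |L| ^ k * |2 * γ 2| := by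
        calc |(-κ) * b k + L ^ k * (2 * γ 2)|
            ≤ |(-κ) * b k| + |L ^ k * (2 * γ 2)| := abs_add_le _ _
          _ = κ * |b k| + |L| ^ k * |2 * γ 2| := by
              rw [abs_mul, abs_mul, abs_neg, abs_pow, abs_of_pos hκ]
      have hκM : κ ≤ M := by
        rw [hM]; nlinarith [abs_nonneg L, abs_nonneg (2 * γ 2)]
      have hLM : |L| ≤ M := by
        rw [hM]; nlinarith [abs_nonneg (2 * γ 2)]
      have h2γM : |2 * γ 2| ≤ M := by
        rw [hM]; nlinarith [abs_nonneg L]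
      calc |(-κ) * b k + L ^ k * (2 * γ 2)| ≤ κ * |b k| + |L| ^ k * |2 * γ 2| := h1
        _ ≤ M * ((k : ℝ) * M ^ k) + M ^ k * M := by
            refine add_le_add (mul_le_mul hκM ih (abs_nonneg _) hM0) ?_
            exact mul_le_mul (pow_le_pow_left₀ (abs_nonneg L) hLM k) h2γM (abs_nonneg _)
              (pow_nonneg hM0 k)
        _ = ((k : ℝ) + 1) * M ^ (k + 1) := by ring
        _ = ((k + 1 : ℕ) : ℝ) * M ^ (k + 1) := by push_cast; ring
  -- term bound
  have hterm_bd : ∀ k : ℕ, |t ^ (k + 1) / (Nat.factorial (k + 1) : ℝ) * b k|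
      ≤ t * ((t * M) ^ k / Nat.factorial k) := by
    intro k
    have hfpos : (0 : ℝ) < Nat.factorial (k + 1) := by
      exact_mod_cast Nat.factorial_pos (k + 1)
    have hfpos' : (0 : ℝ) < Nat.factorial k := by
      exact_mod_cast Nat.factorial_pos k
    have h1 : |t ^ (k + 1) / (Nat.factorial (k + 1) : ℝ) * b k|
        = t ^ (k + 1) / (Nat.factorial (k + 1) : ℝ) * |b k| := by
      rw [abs_mul, abs_div, abs_pow, abs_of_nonneg ht, abs_of_pos hfpos]
    rw [h1]
    have h2 : |b k| ≤ ((k : ℝ) + 1) * M ^ k := by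
      calc |b k| ≤ (k : ℝ) * M ^ k := hbbd k
        _ ≤ ((k : ℝ) + 1) * M ^ k := by
            have := pow_nonneg hM0 k
            nlinarith
    have h3 : t ^ (k + 1) / (Nat.factorial (k + 1) : ℝ) * (((k : ℝ) + 1) * M ^ k)
        = t * ((t * M) ^ k / Nat.factorial k) := by
      rw [Nat.factorial_succ, mul_pow]
      push_cast
      field_simp
      ring
    calc t ^ (k + 1) / (Nat.factorial (k + 1) : ℝ) * |b k|
        ≤ t ^ (k + 1) / (Nat.factorial (k + 1) : ℝ) * (((k : ℝ) + 1) * M ^ k) := by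
          apply mul_le_mul_of_nonneg_left h2
          positivity
      _ = t * ((t * M) ^ k / Nat.factorial k) := h3
  have hsum : Summable (fun k : ℕ => t * ((t * M) ^ k / Nat.factorial k)) :=
    (Real.summable_pow_div_factorial (t * M)).mul_left t
  have habs : Summable (fun k : ℕ => |t ^ (k + 1) / (Nat.factorial (k + 1) : ℝ) * b k|) :=
    Summable.of_nonneg_of_le (fun k => abs_nonneg _) hterm_bd hsum
  refine ⟨habs, ?_⟩
  have hfun : (fun k : ℕ => (t ^ (k + 1) / (Nat.factorial (k + 1) : ℝ))
        * ((derivative (((wfGen κ) ^ k) ξ)).eval 0))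
      = fun k : ℕ => (t ^ (k + 1) / (Nat.factorial (k + 1) : ℝ)) * b k := by
    funext k
    rw [hderiv k]
  rw [hfun]
  exact habs.of_abs.hasSum
end
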